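/- Let f: R^d → R be differentiable with L-Lipschitz gradient, x ∈ R^d, m ∈ R^d, and x' = x - η sign(m) (componentwise sign, η > 0). Then f(x') ≤ f(x) - η ||∇f(x)||_1 + (2η√d/τ) ||m - τ∇f(x)|| + η^2 d L / 2, for any τ > 0. -/

import Mathlib

lemma descent {d : ℕ} (L : ℝ) (hL : 0 ≤ L) (f : EuclideanSpace ℝ (Fin d) → ℝ)
    (hf : Differentiable ℝ f)
    (hlip : ∀ a b, ‖gradient f a - gradient f b‖ ≤ L * ‖a - b‖)
    (x v : EuclideanSpace ℝ (Fin d)) :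
    f (x + v) ≤ f x + inner ℝ (gradient f x) v + L / 2 * ‖v‖ ^ 2 := by
  set g : ℝ := inner ℝ (gradient f x) v with hg
  set φ : ℝ → ℝ := fun t => f (x + t • v) - t * g - L * ‖v‖ ^ 2 / 2 * t ^ 2 with hφ
  have hderiv : ∀ t : ℝ, HasDerivAt φ
      ((inner ℝ (gradient f (x + t • v)) v : ℝ) - g - L * ‖v‖ ^ 2 * t) t := by
    intro t
    have h1 : HasDerivAt (fun t : ℝ => x + t • v) v t := by
      simpa using ((hasDerivAt_id t).smul_const v).const_add x
    have h2 : HasDerivAt (fun t : ℝ => f (x + t • v))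
        ((inner ℝ (gradient f (x + t • v)) v : ℝ)) t := by
      have := ((hf (x + t • v)).hasGradientAt.hasFDerivAt).comp_hasDerivAt t h1
      simpa [Function.comp_def] using this
    have h3 : HasDerivAt (fun t : ℝ => t * g) g t := by
      simpa using (hasDerivAt_id t).mul_const g
    have h4 : HasDerivAt (fun t : ℝ => L * ‖v‖ ^ 2 / 2 * t ^ 2)
        (L * ‖v‖ ^ 2 * t) t := by
      have := (hasDerivAt_pow 2 t).const_mul (L * ‖v‖ ^ 2 / 2)
      exact this.congr_deriv (by norm_num; ring)
    exact (h2.sub h3).sub h4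
  have hanti : AntitoneOn φ (Set.Icc (0:ℝ) 1) := by
    apply antitoneOn_of_deriv_nonpos (convex_Icc 0 1)
    · exact (Differentiable.continuous (fun t => (hderiv t).differentiableAt)).continuousOn
    · intro t ht
      exact ((hderiv t).differentiableAt).differentiableWithinAt
    · intro t ht
      rw [interior_Icc] at ht
      rw [(hderiv t).deriv]
      have hb : (inner ℝ (gradient f (x + t • v)) v : ℝ) - g ≤ L * ‖v‖ ^ 2 * t := by
        have h5 : (inner ℝ (gradient f (x + t • v)) v : ℝ) - g
            = inner ℝ (gradient f (x + t • v) - gradient f x) v := by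
          rw [inner_sub_left]
        rw [h5]
        calc (inner ℝ (gradient f (x + t • v) - gradient f x) v : ℝ)
            ≤ ‖gradient f (x + t • v) - gradient f x‖ * ‖v‖ := real_inner_le_norm _ _
          _ ≤ (L * ‖x + t • v - x‖) * ‖v‖ := by
              exact mul_le_mul_of_nonneg_right (hlip _ _) (norm_nonneg _)
          _ = L * ‖v‖ ^ 2 * t := by
              have : x + t • v - x = t • v := by abel
              rw [this, norm_smul, Real.norm_eq_abs, abs_of_pos ht.1]
              ring
      linarith
  have h01 := hanti (Set.left_mem_Icc.2 one_pos.le) (Set.right_mem_Icc.2 one_pos.le) one_pos.le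
  simp only [hφ, zero_smul, add_zero, one_smul, one_pow, mul_one, zero_mul, zero_pow, sub_zero,
    mul_zero] at h01
  linarith

lemma coord (τ a b : ℝ) (hτ : 0 < τ) :
    τ * (|b| - b * Real.sign a) ≤ 2 * |a - τ * b| := by
  have h1 := le_abs_self (a - τ * b)
  have h2 := neg_abs_le (a - τ * b)
  rcases lt_trichotomy a 0 with h | h | h
  · rw [Real.sign_of_neg h]
    rcases abs_cases b with ⟨hb1, hb2⟩ | ⟨hb1, hb2⟩ <;> nlinarith
  · have hs : Real.sign a = 0 := by rw [h, Real.sign_zero]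
    rw [hs]
    rcases abs_cases b with ⟨hb1, hb2⟩ | ⟨hb1, hb2⟩ <;> nlinarith
  · rw [Real.sign_of_pos h]
    rcases abs_cases b with ⟨hb1, hb2⟩ | ⟨hb1, hb2⟩ <;> nlinarith

/-- Let `f : ℝ^d → ℝ` be differentiable with `L`-Lipschitz gradient,
`x' = x - η • sign m` (componentwise sign, `η > 0`). Then for any `τ > 0`,
`f x' ≤ f x - η ‖∇f x‖₁ + (2η√d/τ) ‖m - τ ∇f x‖ + η² d L / 2`. -/
theorem stmt_8 (d : ℕ) (L η τ : ℝ) (hL : 0 ≤ L) (hη : 0 < η) (hτ : 0 < τ)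
    (f : EuclideanSpace ℝ (Fin d) → ℝ) (hf : Differentiable ℝ f)
    (hlip : ∀ a b, ‖gradient f a - gradient f b‖ ≤ L * ‖a - b‖)
    (x x' m : EuclideanSpace ℝ (Fin d))
    (hx' : ∀ j, x' j = x j - η * Real.sign (m j)) :
    f x' ≤ f x - η * (∑ j, |gradient f x j|)
      + (2 * η * Real.sqrt d / τ) * ‖m - τ • gradient f x‖ + η^2 * d * L / 2 := by
  set g : EuclideanSpace ℝ (Fin d) := gradient f x with hgdef
  set v : EuclideanSpace ℝ (Fin d) := x' - x with hv
  have hxv : x + v = x' := by simp [hv]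
  have hvj : ∀ j, v j = -(η * Real.sign (m j)) := by
    intro j
    simp only [hv, PiLp.sub_apply, hx' j]
    ring
  -- descent lemma
  have hdesc := descent L hL f hf hlip x v
  rw [hxv] at hdesc
  -- inner product expansion
  have hinner : (inner ℝ g v : ℝ) = -η * ∑ j, g j * Real.sign (m j) := by
    rw [PiLp.inner_apply]
    simp only [RCLike.inner_apply, conj_trivial, hvj]
    rw [Finset.mul_sum]
    congr 1
    ext j
    ring
  -- norm of v squared
  have hsign_sq : ∀ z : ℝ, (Real.sign z) ^ 2 ≤ 1 := by
    intro z
    rcases lt_trichotomy z 0 with h | h | h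
    · rw [Real.sign_of_neg h]; norm_num
    · rw [h, Real.sign_zero]; norm_num
    · rw [Real.sign_of_pos h]; norm_num
  have hnv : ‖v‖ ^ 2 ≤ η ^ 2 * d := by
    rw [EuclideanSpace.norm_eq, Real.sq_sqrt (by positivity)]
    calc (∑ j, ‖v j‖ ^ 2) ≤ ∑ _j : Fin d, η ^ 2 := by
          apply Finset.sum_le_sum
          intro j _
          rw [Real.norm_eq_abs, sq_abs, hvj j]
          have := hsign_sq (m j)
          nlinarith [sq_nonneg η]
      _ = η ^ 2 * d := by simp [mul_comm]
  -- per-coordinate sign inequality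
  have hcoord : ∀ j, τ * (|g j| - g j * Real.sign (m j)) ≤ 2 * |m j - τ * g j| :=
    fun j => coord τ (m j) (g j) hτ
  -- ℓ1 ≤ √d ℓ2
  have hl1 : (∑ j, |m j - τ * g j|) ≤ Real.sqrt d * ‖m - τ • g‖ := by
    have hw : ∀ j, (m - τ • g) j = m j - τ * g j := by
      intro j; simp [PiLp.sub_apply, PiLp.smul_apply, smul_eq_mul]
    have hcs := Finset.sum_mul_sq_le_sq_mul_sq Finset.univ (fun _ : Fin d => (1:ℝ))
      (fun j => |m j - τ * g j|)
    simp only [one_pow, Finset.sum_const, Finset.card_univ, Fintype.card_fin, nsmul_eq_mul,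
      mul_one, one_mul, sq_abs] at hcs
    have hnorm : ‖m - τ • g‖ = Real.sqrt (∑ j, (m j - τ * g j) ^ 2) := by
      rw [EuclideanSpace.norm_eq]
      congr 1
      apply Finset.sum_congr rfl
      intro j _
      rw [hw j, Real.norm_eq_abs, sq_abs]
    rw [hnorm, ← Real.sqrt_mul (by positivity)]
    have h1 : (∑ j, |m j - τ * g j|) = Real.sqrt ((∑ j, |m j - τ * g j|) ^ 2) := by
      rw [Real.sqrt_sq (by positivity)]
    rw [h1]
    exact Real.sqrt_le_sqrt hcs
  -- combine
  have hsum : (∑ j, |g j|) - (∑ j, g j * Real.sign (m j))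
      ≤ (2 / τ) * (Real.sqrt d * ‖m - τ • g‖) := by
    have h1 : τ * ((∑ j, |g j|) - (∑ j, g j * Real.sign (m j)))
        ≤ 2 * ∑ j, |m j - τ * g j| := by
      rw [mul_sub, Finset.mul_sum, Finset.mul_sum, ← Finset.sum_sub_distrib, Finset.mul_sum]
      apply Finset.sum_le_sum
      intro j _
      have := hcoord j
      linarith
    have h2 : τ * ((∑ j, |g j|) - (∑ j, g j * Real.sign (m j)))
        ≤ 2 * (Real.sqrt d * ‖m - τ • g‖) :=
      h1.trans (by linarith [mul_le_mul_of_nonneg_left hl1 (by norm_num : (0:ℝ) ≤ 2)])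
    rw [div_mul_eq_mul_div, le_div_iff₀ hτ]
    linarith [h2]
  have hLv : L / 2 * ‖v‖ ^ 2 ≤ η ^ 2 * d * L / 2 := by nlinarith
  rw [hinner] at hdesc
  have hη' : η * ((∑ j, |g j|) - (∑ j, g j * Real.sign (m j)))
      ≤ η * ((2 / τ) * (Real.sqrt d * ‖m - τ • g‖)) :=
    mul_le_mul_of_nonneg_left hsum hη.le
  calc f x' ≤ f x + (-η * ∑ j, g j * Real.sign (m j)) + L / 2 * ‖v‖ ^ 2 := hdesc
    _ ≤ f x - η * (∑ j, |g j|) + (2 * η * Real.sqrt d / τ) * ‖m - τ • g‖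
        + η ^ 2 * d * L / 2 := by
      have : η * ((2 / τ) * (Real.sqrt d * ‖m - τ • g‖))
          = (2 * η * Real.sqrt d / τ) * ‖m - τ • g‖ := by ring
      rw [this] at hη'
      linarith
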